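/- Suppose r : 𝒳 → ℝ is bounded and measurable and there is a constant K ≥ 0 such that | r(x) − ∫ r(y) κ(x,dy) | ≤ K for every x ∈ 𝒳. Define V(x) = Σ_{t=0}^{∞} α^t (κ^t r)(x), where κ^t denotes the t-step kernel (κ^0 r = r and κ^{t+1} r = ∫ (κ^t r)(y) κ(·,dy)). Then for every x ∈ 𝒳, | V(x) − r(x)/(1 − α) | ≤ K/(1 − α)². -/

import Mathlib

open MeasureTheory ProbabilityTheory

/-- If `r` is bounded measurable with `|r(x) − ∫ r(y) κ(x,dy)| ≤ K` for all `x`, then the value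
function `V(x) = Σ_t α^t (κ^t r)(x)` satisfies `|V(x) − r(x)/(1−α)| ≤ K/(1−α)²`.
Here `g t = κ^t r` denotes the `t`-step iterate `g 0 = r`, `g (t+1) x = ∫ g t (y) κ(x,dy)`. -/
theorem value_function_close_to_myopic
    {𝒳 : Type*} [MeasurableSpace 𝒳]
    (κ : Kernel 𝒳 𝒳) [IsMarkovKernel κ]
    (α : ℝ) (hα0 : 0 < α) (hα1 : α < 1)
    (r : 𝒳 → ℝ) (hr : Measurable r)
    (M : ℝ) (hbdd : ∀ x, |r x| ≤ M)
    (K : ℝ) (hK : 0 ≤ K)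
    (hKr : ∀ x, |r x - ∫ y, r y ∂(κ x)| ≤ K)
    (g : ℕ → 𝒳 → ℝ)
    (hg0 : ∀ x, g 0 x = r x)
    (hgsucc : ∀ t x, g (t + 1) x = ∫ y, g t y ∂(κ x)) :
    ∀ x, |(∑' t : ℕ, α ^ t * g t x) - r x / (1 - α)| ≤ K / (1 - α) ^ 2 := by
  have h1α : (0:ℝ) < 1 - α := by linarith
  -- measurability of each iterate
  have hmeas : ∀ t, StronglyMeasurable (g t) := by
    intro t
    induction t with
    | zero =>
      have : g 0 = r := funext hg0
      rw [this]; exact hr.stronglyMeasurable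
    | succ t ih =>
      have : g (t + 1) = fun x => ∫ y, g t y ∂(κ x) := funext (hgsucc t)
      rw [this]
      exact StronglyMeasurable.integral_kernel_prod_right
        (f := fun _ y => g t y) (ih.comp_measurable measurable_snd)
  -- uniform bound
  have hbound : ∀ t x, |g t x| ≤ M := by
    intro t
    induction t with
    | zero => intro x; rw [hg0]; exact hbdd x
    | succ t ih =>
      intro x
      rw [hgsucc, ← Real.norm_eq_abs]
      calc ‖∫ y, g t y ∂(κ x)‖ ≤ M * ((κ x) Set.univ).toReal :=
            norm_integral_le_of_norm_le_const (Filter.Eventually.of_forall fun y => ih y)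
        _ = M := by simp
  have hint : ∀ t x, Integrable (g t) (κ x) := fun t x =>
    Integrable.mono' (integrable_const M) (hmeas t).aestronglyMeasurable
      (Filter.Eventually.of_forall fun y => hbound t y)
  -- successive differences bounded by K
  have hdiff : ∀ t x, |g (t + 1) x - g t x| ≤ K := by
    intro t
    induction t with
    | zero =>
      intro x
      rw [hgsucc 0 x]
      have : ∫ y, g 0 y ∂(κ x) = ∫ y, r y ∂(κ x) := by
        congr 1; exact funext hg0
      rw [this, hg0, abs_sub_comm]
      exact hKr x
    | succ t ih =>
      intro x
      rw [hgsucc (t+1) x, hgsucc t x, ← integral_sub (hint (t+1) x) (hint t x), ← Real.norm_eq_abs]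
      calc ‖∫ y, (g (t+1) y - g t y) ∂(κ x)‖ ≤ K * ((κ x) Set.univ).toReal :=
            norm_integral_le_of_norm_le_const (Filter.Eventually.of_forall fun y => ih y)
        _ = K := by simp
  -- distance from r grows at most linearly
  have hdr : ∀ t x, |g t x - r x| ≤ t * K := by
    intro t
    induction t with
    | zero => intro x; rw [hg0]; simp
    | succ t ih =>
      intro x
      calc |g (t+1) x - r x| = |(g (t+1) x - g t x) + (g t x - r x)| := by ring_nf
        _ ≤ |g (t+1) x - g t x| + |g t x - r x| := abs_add_le _ _
        _ ≤ K + t * K := add_le_add (hdiff t x) (ih x)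
        _ = (t+1 : ℕ) * K := by push_cast; ring
  intro x
  have hαnorm : ‖α‖ < 1 := by rw [Real.norm_eq_abs, abs_of_pos hα0]; exact hα1
  have hsum_geo : Summable (fun t : ℕ => α ^ t) := summable_geometric_of_lt_one hα0.le hα1
  have hs1 : Summable (fun t : ℕ => α ^ t * g t x) := by
    apply Summable.of_norm_bounded (hsum_geo.mul_right M)
    intro t
    rw [Real.norm_eq_abs, abs_mul, abs_pow, abs_of_pos hα0]
    exact mul_le_mul_of_nonneg_left (hbound t x) (pow_nonneg hα0.le t)
  have hs2 : Summable (fun t : ℕ => α ^ t * r x) := hsum_geo.mul_right _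
  have htsum_r : (∑' t : ℕ, α ^ t * r x) = r x / (1 - α) := by
    rw [tsum_mul_right, tsum_geometric_of_lt_one hα0.le hα1, div_eq_inv_mul]
  have hsum_t : Summable (fun t : ℕ => (t : ℝ) * α ^ t) := by
    have := summable_pow_mul_geometric_of_norm_lt_one 1 hαnorm (R := ℝ)
    simpa using this
  have key : (∑' t : ℕ, α ^ t * g t x) - r x / (1 - α)
      = ∑' t : ℕ, (α ^ t * g t x - α ^ t * r x) := by
    rw [Summable.tsum_sub hs1 hs2, htsum_r]
  rw [key]
  have hsum3 : Summable (fun t : ℕ => (t : ℝ) * α ^ t * K) := hsum_t.mul_right K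
  calc |∑' t : ℕ, (α ^ t * g t x - α ^ t * r x)|
      ≤ ∑' t : ℕ, (t : ℝ) * α ^ t * K := by
        apply norm_tsum_le_tsum_norm (E := ℝ) ?_ |>.trans
        · apply Summable.tsum_le_tsum ?_ ((hs1.sub hs2).norm) hsum3
          intro t
          rw [Real.norm_eq_abs, ← mul_sub, abs_mul, abs_pow, abs_of_pos hα0]
          calc α ^ t * |g t x - r x| ≤ α ^ t * (t * K) :=
                mul_le_mul_of_nonneg_left (hdr t x) (pow_nonneg hα0.le t)
            _ = (t : ℝ) * α ^ t * K := by ring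
        · apply Summable.of_nonneg_of_le (fun t => norm_nonneg _) ?_ hsum3
          intro t
          rw [Real.norm_eq_abs, ← mul_sub, abs_mul, abs_pow, abs_of_pos hα0]
          calc α ^ t * |g t x - r x| ≤ α ^ t * (t * K) :=
                mul_le_mul_of_nonneg_left (hdr t x) (pow_nonneg hα0.le t)
            _ = (t : ℝ) * α ^ t * K := by ring
    _ = K * (α / (1 - α) ^ 2) := by
        rw [tsum_mul_right, tsum_coe_mul_geometric_of_norm_lt_one hαnorm]; ring
    _ ≤ K / (1 - α) ^ 2 := by
        rw [div_eq_mul_inv K]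
        apply mul_le_mul_of_nonneg_left ?_ hK
        rw [div_eq_mul_inv]
        exact mul_le_of_le_one_left (by positivity) hα1.le
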